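/- Let Γ be a countable discrete abelian group with compact Pontryagin dual Γ̂ carrying normalized Haar measure λ. Assume that for every finitely supported function c : Γ → ℂ that is not identically zero, the function χ ↦ ∑_{γ∈Γ} c(γ) χ(γ) is nonzero for λ-almost every χ ∈ Γ̂. Let K be a separable complex Hilbert space and π a unitary representation of Γ on K such that for every f ∈ K there exists a finite Borel measure ν_f on Γ̂, absolutely continuous with respect to λ, with ⟨π(γ)f, f⟩ = ∫_{Γ̂} χ(γ) dν_f(χ) for all γ ∈ Γ. Then for every nonzero f ∈ K the family (π(γ) f)_{γ∈Γ} is linearly independent. -/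

import Mathlib

open MeasureTheory

noncomputable section

/-- The action of a unitary operator on a Hilbert space vector. -/
def uact {K : Type*} [NormedAddCommGroup K] [InnerProductSpace ℂ K] [CompleteSpace K]
    (u : unitary (K →L[ℂ] K)) (x : K) : K := (u : K →L[ℂ] K) x

theorem stmt11
    -- `Γ` : a countable discrete abelian group with compact dual carrying Haar measure `lam`
    {Γ : Type*} [CommGroup Γ] [Countable Γ]
    [TopologicalSpace Γ] [DiscreteTopology Γ] [IsTopologicalGroup Γ]
    [MeasurableSpace (PontryaginDual Γ)] [BorelSpace (PontryaginDual Γ)]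
    [CompactSpace (PontryaginDual Γ)]
    (lam : Measure (PontryaginDual Γ)) [lam.IsHaarMeasure] [IsProbabilityMeasure lam]
    -- nontrivial finite character sums are a.e. nonzero
    (hchar : ∀ c : Γ →₀ ℂ, c ≠ 0 →
      ∀ᵐ χ ∂lam, (∑ γ ∈ c.support, c γ * ((χ γ : Circle) : ℂ)) ≠ 0)
    -- `K` : a separable complex Hilbert space, `π` a unitary representation of `Γ` on `K`
    {K : Type*} [NormedAddCommGroup K] [InnerProductSpace ℂ K] [CompleteSpace K]
    [TopologicalSpace.SeparableSpace K]
    (π : Γ →* unitary (K →L[ℂ] K))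
    -- `π` has absolutely continuous spectral measure
    (hspec : ∀ f : K, ∃ ν : Measure (PontryaginDual Γ), IsFiniteMeasure ν ∧ ν ≪ lam ∧
      ∀ γ : Γ, (inner ℂ (uact (π γ) f) f : ℂ) = ∫ χ, ((χ γ : Circle) : ℂ) ∂ν) :
    -- conclusion
    ∀ f : K, f ≠ 0 → LinearIndependent ℂ (fun γ : Γ => uact (π γ) f) := by
  intro f hf
  rw [linearIndependent_iff]
  intro l hl
  by_contra hl0
  obtain ⟨ν, hνfin, hac, hint⟩ := hspec f
  -- continuity of evaluation
  have hev : ∀ γ : Γ, Continuous (fun χ : PontryaginDual Γ => ((χ γ : Circle) : ℂ)) := by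
    intro γ
    exact continuous_induced_dom.comp
      ((continuous_eval_const γ : Continuous fun χ : ContinuousMonoidHom Γ Circle => χ γ))
  -- the character sum function
  set g : PontryaginDual Γ → ℂ :=
    fun χ => ∑ γ ∈ l.support, (starRingEnd ℂ) (l γ) * ((χ γ : Circle) : ℂ) with hg
  have hgcont : Continuous g := by
    apply continuous_finset_sum
    intro γ _
    exact (continuous_const.mul (hev γ))
  -- inner products between translates
  have huu : ∀ γ γ' : Γ, (inner ℂ (uact (π γ) f) (uact (π γ') f) : ℂ)
      = ∫ χ, ((starRingEnd ℂ) ((χ γ' : Circle) : ℂ)) * ((χ γ : Circle) : ℂ) ∂ν := by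
    intro γ γ'
    have h1 : uact (π γ'⁻¹) (uact (π γ) f) = uact (π (γ'⁻¹ * γ)) f := by
      rw [map_mul]; rfl
    have h2 : uact (π γ'⁻¹) (uact (π γ') f) = f := by
      have he : uact (π γ'⁻¹ * π γ') f = uact 1 f := by
        rw [← map_mul, inv_mul_cancel, map_one]
      exact he
    calc (inner ℂ (uact (π γ) f) (uact (π γ') f) : ℂ)
        = inner ℂ (uact (π γ'⁻¹) (uact (π γ) f)) (uact (π γ'⁻¹) (uact (π γ') f)) :=
          (Unitary.inner_map_map (π γ'⁻¹) _ _).symm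
      _ = inner ℂ (uact (π (γ'⁻¹ * γ)) f) f := by rw [h1, h2]
      _ = ∫ χ, ((χ (γ'⁻¹ * γ) : Circle) : ℂ) ∂ν := hint _
      _ = ∫ χ, ((starRingEnd ℂ) ((χ γ' : Circle) : ℂ)) * ((χ γ : Circle) : ℂ) ∂ν := by
          apply integral_congr_ae
          filter_upwards with χ
          rw [map_mul, map_inv, Circle.coe_mul, Circle.coe_inv_eq_conj]
  -- integrability of products of characters
  have hintg : ∀ γ γ' : Γ,
      Integrable (fun χ : PontryaginDual Γ =>
        ((starRingEnd ℂ) ((χ γ' : Circle) : ℂ)) * ((χ γ : Circle) : ℂ)) ν := by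
    intro γ γ'
    exact (((Complex.continuous_conj.comp (hev γ')).mul (hev γ)).integrable_of_hasCompactSupport
      (HasCompactSupport.of_compactSpace _))
  -- key identity: 0 = ∫ |g|^2
  have key : (0 : ℂ) = ∫ χ, g χ * (starRingEnd ℂ) (g χ) ∂ν := by
    have h0 : (inner ℂ (Finsupp.linearCombination ℂ (fun γ : Γ => uact (π γ) f) l)
        (Finsupp.linearCombination ℂ (fun γ : Γ => uact (π γ) f) l) : ℂ) = 0 := by
      rw [hl]; simp
    rw [Finsupp.linearCombination_apply, Finsupp.sum, sum_inner] at h0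
    simp only [inner_sum, inner_smul_left, inner_smul_right] at h0
    have h0' : ∑ γ ∈ l.support, ∑ γ' ∈ l.support, (starRingEnd ℂ) (l γ) * (l γ' *
        (inner ℂ (uact (π γ) f) (uact (π γ') f) : ℂ)) = 0 := by
      rw [← h0]
      apply Finset.sum_congr rfl; intro γ _
      apply Finset.sum_congr rfl; intro γ' _
      ring
    calc (0 : ℂ)
        = ∑ γ ∈ l.support, ∑ γ' ∈ l.support, (starRingEnd ℂ) (l γ) * (l γ' *
            (inner ℂ (uact (π γ) f) (uact (π γ') f) : ℂ)) := h0'.symm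
      _ = ∑ γ ∈ l.support, ∑ γ' ∈ l.support,
            ∫ χ, ((starRingEnd ℂ) (l γ) * ((χ γ : Circle) : ℂ)) *
              (starRingEnd ℂ) ((starRingEnd ℂ) (l γ') * ((χ γ' : Circle) : ℂ)) ∂ν := by
          apply Finset.sum_congr rfl; intro γ _
          apply Finset.sum_congr rfl; intro γ' _
          rw [huu γ γ', ← integral_const_mul, ← integral_const_mul]
          apply integral_congr_ae
          filter_upwards with χ
          simp only [map_mul, RingHom.id_apply, Complex.conj_conj]
          ring
      _ = ∫ χ, ∑ γ ∈ l.support, ∑ γ' ∈ l.support,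
            ((starRingEnd ℂ) (l γ) * ((χ γ : Circle) : ℂ)) *
              (starRingEnd ℂ) ((starRingEnd ℂ) (l γ') * ((χ γ' : Circle) : ℂ)) ∂ν := by
          rw [integral_finset_sum]
          · apply Finset.sum_congr rfl; intro γ _
            rw [integral_finset_sum]
            intro γ' _
            have := ((hintg γ γ').const_mul ((starRingEnd ℂ) (l γ) * l γ'))
            apply this.congr
            filter_upwards with χ
            simp only [map_mul, RingHom.id_apply, Complex.conj_conj]
            ring
          · intro γ _
            apply integrable_finset_sum
            intro γ' _
            have := ((hintg γ γ').const_mul ((starRingEnd ℂ) (l γ) * l γ'))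
            apply this.congr
            filter_upwards with χ
            simp only [map_mul, RingHom.id_apply, Complex.conj_conj]
            ring
      _ = ∫ χ, g χ * (starRingEnd ℂ) (g χ) ∂ν := by
          apply integral_congr_ae
          filter_upwards with χ
          rw [hg]
          rw [map_sum, ← Finset.sum_mul_sum]
  -- deduce that the real integral of ‖g‖² vanishes
  have hgint : Integrable (fun χ => ‖g χ‖ ^ 2) ν :=
    ((hgcont.norm.pow 2).integrable_of_hasCompactSupport (HasCompactSupport.of_compactSpace _))
  have hreal : ∫ χ, ‖g χ‖ ^ 2 ∂ν = 0 := by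
    have h1 : (0 : ℂ) = ∫ χ, ((‖g χ‖ ^ 2 : ℝ) : ℂ) ∂ν := by
      rw [key]
      apply integral_congr_ae
      filter_upwards with χ
      rw [Complex.mul_conj, Complex.normSq_eq_norm_sq]
    have h2 : ∫ χ, ((‖g χ‖ ^ 2 : ℝ) : ℂ) ∂ν = ((∫ χ, ‖g χ‖ ^ 2 ∂ν : ℝ) : ℂ) :=
      integral_ofReal
    rw [h2] at h1
    exact_mod_cast h1.symm
  have hg0 : ∀ᵐ χ ∂ν, g χ = 0 := by
    have := (integral_eq_zero_iff_of_nonneg (fun χ => by positivity) hgint).mp hreal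
    filter_upwards [this] with χ hχ
    have : ‖g χ‖ ^ 2 = 0 := hχ
    simpa using this
  -- a.e. nonvanishing of g via hchar
  set c : Γ →₀ ℂ := l.mapRange (starRingEnd ℂ) (map_zero _) with hc
  have hc0 : c ≠ 0 := by
    intro h
    apply hl0
    ext γ
    have h3 := DFunLike.congr_fun h γ
    simp only [hc, Finsupp.mapRange_apply, Finsupp.coe_zero, Pi.zero_apply,
      map_eq_zero] at h3
    simpa using h3
  have hcsupp : c.support = l.support :=
    Finsupp.support_mapRange_of_injective (map_zero _) l (starRingEnd ℂ).injective
  have hgne : ∀ᵐ χ ∂ν, g χ ≠ 0 := by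
    have h := hchar c hc0
    have h2 : ∀ᵐ χ ∂lam, g χ ≠ 0 := by
      filter_upwards [h] with χ hχ
      have he : (∑ γ ∈ c.support, c γ * ((χ γ : Circle) : ℂ)) = g χ := by
        rw [hcsupp, hg]
        apply Finset.sum_congr rfl
        intro γ _
        simp [hc, Finsupp.mapRange_apply]
      rw [he] at hχ
      exact hχ
    exact hac.ae_le h2
  -- contradiction: ν = 0, hence f = 0
  have hνfalse : ∀ᵐ χ ∂ν, False := by
    filter_upwards [hg0, hgne] with χ h1 h2
    exact h2 h1
  have hν0 : ν = 0 := by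
    have : ν Set.univ = 0 := by
      simpa using hνfalse
    exact Measure.measure_univ_eq_zero.mp this
  have hff : (inner ℂ f f : ℂ) = 0 := by
    have h1 := hint 1
    rw [hν0, integral_zero_measure, map_one] at h1
    exact h1
  exact hf (inner_self_eq_zero.mp hff)
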